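/- Let g ≥ h ≥ 2 be integers and let A ⊆ ℕ be a C_h[g]-set in ℤ. There is a constant C = C(g,h) > 0 such that for every integer N ≥ 2, writing A_ν = |A ∩ ((ν-1)N, νN]| for 1 ≤ ν ≤ N, one has Σ_{ν=1}^{N} A_ν · ν^{-(1 - 1/h)} ≤ C · (N log N)^{1 - 1/h}. -/

import Mathlib

/-- `A ⊆ Γ` is a `C_h[g]`-set. -/
def IsChSet {Γ : Type*} [AddCommGroup Γ] (h g : ℕ) (A : Set Γ) : Prop :=
  ∀ X : Finset Γ, X.card = h → ∀ K : Finset Γ, K.card = g →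
    ∃ k ∈ K, ¬ (∀ x ∈ X, x + k ∈ A)

namespace Stmt14Aux

/-- A total "minimum" function on finsets of naturals. -/
def mn (X : Finset ℕ) : ℕ := if hX : X.Nonempty then X.min' hX else 0

lemma mn_mem {X : Finset ℕ} (hX : X.Nonempty) : mn X ∈ X := by
  simp only [mn, dif_pos hX]; exact X.min'_mem hX

lemma mn_le {X : Finset ℕ} (hX : X.Nonempty) {x : ℕ} (hx : x ∈ X) : mn X ≤ x := by
  simp only [mn, dif_pos hX]; exact X.min'_le x hx

lemma block_eq {N x ν ν' : ℕ} (h1 : 1 ≤ ν) (h1' : 1 ≤ ν')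
    (ha : (ν - 1) * N < x) (hb : x ≤ ν * N)
    (ha' : (ν' - 1) * N < x) (hb' : x ≤ ν' * N) : ν = ν' := by
  by_contra hne
  rcases Nat.lt_or_ge ν ν' with hlt | hge
  · have h2 : ν ≤ ν' - 1 := by omega
    have := Nat.mul_le_mul h2 (le_refl N)
    omega
  · have hlt : ν' < ν := by omega
    have h2 : ν' ≤ ν - 1 := by omega
    have := Nat.mul_le_mul h2 (le_refl N)
    omega

lemma subinj (m : ℤ) : Function.Injective (fun x : ℕ => (x : ℤ) - m) := by
  intro a b hab
  simp only at hab
  exact Nat.cast_injective (by linarith : (a : ℤ) = b)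

lemma pow_le_aux (h a : ℕ) (hh : 1 ≤ h) :
    a ^ h ≤ h ^ h * (Nat.factorial h * a.choose h) + h ^ h := by
  rcases Nat.lt_or_ge a h with hlt | hge
  · have : a ^ h ≤ h ^ h := Nat.pow_le_pow_left (le_of_lt hlt) _
    omega
  · have h1 : a ≤ h * (a + 1 - h) := by
      have h2 : a - h ≤ h * (a - h) := Nat.le_mul_of_pos_left _ (by omega)
      have h3 : h * (a + 1 - h) = h * (a - h) + h := by
        have he : a + 1 - h = (a - h) + 1 := by omega
        rw [he, Nat.mul_add, Nat.mul_one]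
      omega
    calc a ^ h ≤ (h * (a + 1 - h)) ^ h := Nat.pow_le_pow_left h1 _
      _ = h ^ h * (a + 1 - h) ^ h := mul_pow _ _ _
      _ ≤ h ^ h * (Nat.factorial h * a.choose h) := by
          apply Nat.mul_le_mul_left
          rw [← Nat.descFactorial_eq_factorial_mul_choose]
          exact Nat.pow_sub_le_descFactorial a h
      _ ≤ _ := Nat.le_add_right _ _

/-- The main counting lemma: the number of `h`-element subsets of the blocks is small,
since each translation pattern can occur at most `g-1` times. -/
lemma count_bound (g h : ℕ) (hh : 2 ≤ h) (hgh : h ≤ g)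
    (A : Set ℕ) (hA : IsChSet h g ((fun a : ℕ => (a : ℤ)) '' A))
    (N : ℕ) (B : ℕ → Finset ℕ)
    (hB : ∀ ν x, x ∈ B ν ↔ ((ν - 1) * N < x ∧ x ≤ ν * N) ∧ x ∈ A) :
    ∑ ν ∈ Finset.Icc 1 N, ((B ν).card.choose h) ≤ g * N ^ (h - 1) := by
  classical
  set 𝒳 : Finset (Finset ℕ) :=
    (Finset.Icc 1 N).biUnion (fun ν => (B ν).powersetCard h) with h𝒳
  have hXprop : ∀ X ∈ 𝒳, (∀ x ∈ X, x ∈ A) ∧ X.card = h ∧ X.Nonempty ∧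
      ∃ ν, 1 ≤ ν ∧ ∀ x ∈ X, (ν - 1) * N < x ∧ x ≤ ν * N := by
    intro X hX
    rw [h𝒳, Finset.mem_biUnion] at hX
    obtain ⟨ν, hν, hXν⟩ := hX
    rw [Finset.mem_powersetCard] at hXν
    obtain ⟨hsub, hcard⟩ := hXν
    have hne : X.Nonempty := Finset.card_pos.mp (by omega)
    exact ⟨fun x hx => ((hB ν x).mp (hsub hx)).2, hcard, hne, ν,
      (Finset.mem_Icc.mp hν).1, fun x hx => ((hB ν x).mp (hsub hx)).1⟩
  have hcard𝒳 : 𝒳.card = ∑ ν ∈ Finset.Icc 1 N, ((B ν).card.choose h) := by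
    rw [h𝒳, Finset.card_biUnion]
    · exact Finset.sum_congr rfl fun ν _ => by rw [Finset.card_powersetCard]
    · intro ν hν ν' hν' hne
      rw [Function.onFun, Finset.disjoint_left]
      intro X hX hX'
      rw [Finset.mem_powersetCard] at hX hX'
      obtain ⟨x, hx⟩ := Finset.card_pos.mp (by omega : 0 < X.card)
      have hb1 := ((hB ν x).mp (hX.1 hx)).1
      have hb2 := ((hB ν' x).mp (hX'.1 hx)).1
      exact hne (block_eq (Finset.mem_Icc.mp hν).1 (Finset.mem_Icc.mp hν').1
        hb1.1 hb1.2 hb2.1 hb2.2)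
  set f : Finset ℕ → Finset ℤ := fun X => X.image (fun x : ℕ => (x : ℤ) - (mn X : ℤ)) with hf
  have hrecover : ∀ X : Finset ℕ,
      X.image (fun x : ℕ => (x : ℤ)) = (f X).image (fun d => d + (mn X : ℤ)) := by
    intro X
    rw [hf]
    simp only [Finset.image_image]
    refine (Finset.image_congr fun x _ => ?_).symm
    simp only [Function.comp]
    ring
  have hcardf : ∀ X : Finset ℕ, (f X).card = X.card := by
    intro X
    rw [hf]
    exact Finset.card_image_of_injective _ (subinj _)
  have h0mem : ∀ D ∈ 𝒳.image f, (0 : ℤ) ∈ D := by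
    intro D hD
    obtain ⟨X, hX𝒳, hfX⟩ := Finset.mem_image.mp hD
    obtain ⟨_, _, hXne, _⟩ := hXprop X hX𝒳
    rw [← hfX, hf]
    exact Finset.mem_image.mpr ⟨mn X, mn_mem hXne, by ring⟩
  -- fiber bound
  have hfiber : ∀ D ∈ 𝒳.image f, (𝒳.filter (fun X => f X = D)).card ≤ g - 1 := by
    intro D hD
    by_contra hcon
    push_neg at hcon
    set F := 𝒳.filter (fun X => f X = D) with hF
    have hgle : g ≤ F.card := by omega
    have hFsub : ∀ X ∈ F, X ∈ 𝒳 ∧ f X = D := fun X hX => by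
      have := Finset.mem_filter.mp hX; exact ⟨this.1, this.2⟩
    have hminj : Set.InjOn (fun X : Finset ℕ => (mn X : ℤ)) F := by
      intro X hX Y hY hXY
      simp only at hXY
      have e1 := hrecover X
      have e2 := hrecover Y
      rw [(hFsub X hX).2] at e1
      rw [(hFsub Y hY).2] at e2
      rw [hXY] at e1
      have : X.image (fun x : ℕ => (x : ℤ)) = Y.image (fun x : ℕ => (x : ℤ)) := by
        rw [e1, e2]
      exact Finset.image_injective Nat.cast_injective this
    have hKcard : (F.image (fun X => (mn X : ℤ))).card = F.card :=
      Finset.card_image_of_injOn hminj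
    obtain ⟨K, hKsub, hKg⟩ :=
      Finset.exists_subset_card_eq (show g ≤ (F.image (fun X => (mn X : ℤ))).card by omega)
    obtain ⟨X0, hX0⟩ : F.Nonempty := Finset.card_pos.mp (by omega)
    have hDcard : D.card = h := by
      rw [← (hFsub X0 hX0).2, hcardf]
      exact (hXprop X0 (hFsub X0 hX0).1).2.1
    obtain ⟨k, hkK, hk⟩ := hA D hDcard K hKg
    apply hk
    intro d hd
    obtain ⟨Y, hYF, hYk⟩ := Finset.mem_image.mp (hKsub hkK)
    have hfY : f Y = D := (hFsub Y hYF).2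
    rw [← hfY, hf] at hd
    obtain ⟨x, hxY, hxd⟩ := Finset.mem_image.mp hd
    have hxA : x ∈ A := (hXprop Y (hFsub Y hYF).1).1 x hxY
    have hdk : d + k = (x : ℤ) := by rw [← hxd, ← hYk]; ring
    rw [hdk]
    exact ⟨x, hxA, rfl⟩
  -- image bound
  have himgmem : ∀ D ∈ 𝒳.image f,
      D.erase 0 ∈ (Finset.Icc (1 : ℤ) ((N : ℤ) - 1)).powersetCard (h - 1) := by
    intro D hD
    obtain ⟨X, hX𝒳, hfX⟩ := Finset.mem_image.mp hD
    obtain ⟨hXA, hXcard, hXne, ν, hν1, hXbd⟩ := hXprop X hX𝒳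
    rw [Finset.mem_powersetCard]
    constructor
    · intro d hd
      have hd0 : d ≠ 0 := Finset.ne_of_mem_erase hd
      have hdD : d ∈ D := Finset.mem_of_mem_erase hd
      rw [← hfX, hf] at hdD
      obtain ⟨x, hx, hxd⟩ := Finset.mem_image.mp hdD
      have hxb := hXbd x hx
      have hmb := hXbd _ (mn_mem hXne)
      have hle : mn X ≤ x := mn_le hXne hx
      rw [Finset.mem_Icc]
      have hcast : (((ν - 1) * N : ℕ) : ℤ) = ((ν : ℤ) - 1) * N := by
        rw [Nat.cast_mul, Nat.cast_sub hν1, Nat.cast_one]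
      have hx2 : (x : ℤ) ≤ (ν : ℤ) * N := by exact_mod_cast hxb.2
      have hm1 : ((ν : ℤ) - 1) * N < (mn X : ℤ) := by
        rw [← hcast]; exact_mod_cast hmb.1
      have hd0' : (0 : ℤ) ≤ d := by
        rw [← hxd]
        have : (mn X : ℤ) ≤ (x : ℤ) := by exact_mod_cast hle
        linarith
      constructor
      · omega
      · rw [← hxd]; linarith
    · rw [Finset.card_erase_of_mem (h0mem D hD), ← hfX, hcardf, hXcard]
  have himg : (𝒳.image f).card ≤ (N - 1).choose (h - 1) := by
    have hinj : Set.InjOn (fun D : Finset ℤ => D.erase 0) (𝒳.image f) := by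
      intro D hD D' hD' hDD
      simp only at hDD
      rw [← Finset.insert_erase (h0mem D hD), ← Finset.insert_erase (h0mem D' hD'), hDD]
    calc (𝒳.image f).card
        ≤ ((Finset.Icc (1 : ℤ) ((N : ℤ) - 1)).powersetCard (h - 1)).card :=
          Finset.card_le_card_of_injOn _ himgmem hinj
      _ = (Finset.Icc (1 : ℤ) ((N : ℤ) - 1)).card.choose (h - 1) :=
          Finset.card_powersetCard _ _
      _ = (N - 1).choose (h - 1) := by
          rw [Int.card_Icc]
          congr 1
          omega
  calc ∑ ν ∈ Finset.Icc 1 N, ((B ν).card.choose h) = 𝒳.card := hcard𝒳.symm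
    _ ≤ (g - 1) * (𝒳.image f).card := Finset.card_le_mul_card_image 𝒳 (g - 1) hfiber
    _ ≤ g * N ^ (h - 1) := by
        have h1 : (N - 1).choose (h - 1) ≤ (N - 1) ^ (h - 1) := Nat.choose_le_pow _ _
        have h2 : (N - 1) ^ (h - 1) ≤ N ^ (h - 1) := Nat.pow_le_pow_left (by omega) _
        calc (g - 1) * (𝒳.image f).card ≤ g * ((N - 1).choose (h - 1)) :=
              Nat.mul_le_mul (by omega) himg
          _ ≤ g * N ^ (h - 1) := Nat.mul_le_mul_left _ (le_trans h1 h2)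

end Stmt14Aux

open Stmt14Aux in
theorem stmt14 (g h : ℕ) (hh : 2 ≤ h) (hgh : h ≤ g) :
    ∃ C : ℝ, 0 < C ∧ ∀ A : Set ℕ, IsChSet h g ((fun a : ℕ => (a : ℤ)) '' A) →
      ∀ N : ℕ, 2 ≤ N →
        ∑ ν ∈ Finset.Icc 1 N,
            ((A ∩ Set.Ioc ((ν - 1) * N) (ν * N)).ncard : ℝ) * (ν : ℝ) ^ (-(1 - (1 : ℝ) / h))
          ≤ C * ((N : ℝ) * Real.log N) ^ (1 - (1 : ℝ) / h) := by
  classical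
  set c₁ : ℕ := h ^ h * Nat.factorial h * g + h ^ h with hc₁
  have hc₁pos : 0 < c₁ := by
    have : 0 < h ^ h := Nat.pow_pos (by omega)
    omega
  set c₂ : ℝ := 1 / Real.log 2 + 1 with hc₂
  have hlog2 : 0 < Real.log 2 := Real.log_pos (by norm_num)
  have hc₂1 : 1 ≤ c₂ := by
    have : 0 ≤ 1 / Real.log 2 := by positivity
    rw [hc₂]; linarith
  refine ⟨(c₁ : ℝ) * c₂, by
    apply mul_pos
    · exact_mod_cast hc₁pos
    · linarith, ?_⟩
  intro A hA N hN
  set B : ℕ → Finset ℕ :=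
    fun ν => (Finset.Ioc ((ν - 1) * N) (ν * N)).filter (fun x => x ∈ A) with hBdef
  have hB : ∀ ν x, x ∈ B ν ↔ ((ν - 1) * N < x ∧ x ≤ ν * N) ∧ x ∈ A := by
    intro ν x
    rw [hBdef]
    simp [Finset.mem_filter, Finset.mem_Ioc]
  have hncard : ∀ ν, (A ∩ Set.Ioc ((ν - 1) * N) (ν * N)).ncard = (B ν).card := by
    intro ν
    rw [← Set.ncard_coe_finset]
    congr 1
    ext x
    simp only [Finset.mem_coe, hB ν x, Set.mem_inter_iff, Set.mem_Ioc]
    tauto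
  -- conjugate exponents
  have hh1 : (1 : ℝ) < (h : ℝ) := by exact_mod_cast (by omega : 1 < h)
  have hpq : ((h : ℝ)).HolderConjugate (Real.conjExponent (h : ℝ)) :=
    Real.HolderConjugate.conjExponent hh1
  set q : ℝ := Real.conjExponent (h : ℝ) with hqdef
  have hq1 : 1 < q := hpq.symm.lt
  have hα : 1 - (1 : ℝ) / h = 1 / q := by
    have := hpq.inv_add_inv_eq_one
    rw [one_div, one_div]
    linarith
  have hαnonneg : 0 ≤ 1 - (1 : ℝ) / h := by
    rw [hα]
    positivity
  have hα1 : 1 - (1 : ℝ) / h ≤ 1 := by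
    have : 0 ≤ (1 : ℝ) / h := by positivity
    linarith
  -- counting bound
  have hS : ∑ ν ∈ Finset.Icc 1 N, ((B ν).card.choose h) ≤ g * N ^ (h - 1) :=
    count_bound g h hh hgh A hA N B hB
  have hsum_pow : ∑ ν ∈ Finset.Icc 1 N, (B ν).card ^ h ≤ c₁ * N ^ (h - 1) := by
    have hN1 : N ≤ N ^ (h - 1) := by
      calc N = N ^ 1 := (pow_one N).symm
        _ ≤ N ^ (h - 1) := Nat.pow_le_pow_right (by omega) (by omega)
    calc ∑ ν ∈ Finset.Icc 1 N, (B ν).card ^ h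
        ≤ ∑ ν ∈ Finset.Icc 1 N, (h ^ h * (Nat.factorial h * (B ν).card.choose h) + h ^ h) :=
          Finset.sum_le_sum fun ν _ => pow_le_aux h _ (by omega)
      _ = h ^ h * Nat.factorial h * (∑ ν ∈ Finset.Icc 1 N, (B ν).card.choose h) + h ^ h * N := by
          rw [Finset.sum_add_distrib, Finset.sum_const, Nat.card_Icc, Finset.mul_sum]
          simp only [Nat.add_sub_cancel, smul_eq_mul]
          congr 1
          · exact Finset.sum_congr rfl fun ν _ => by ring
          · ring
      _ ≤ h ^ h * Nat.factorial h * (g * N ^ (h - 1)) + h ^ h * N ^ (h - 1) :=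
          Nat.add_le_add (Nat.mul_le_mul_left _ hS) (Nat.mul_le_mul_left _ hN1)
      _ = c₁ * N ^ (h - 1) := by rw [hc₁]; ring
  have hsum_pow' :
      ∑ ν ∈ Finset.Icc 1 N, ((B ν).card : ℝ) ^ (h : ℝ) ≤ (c₁ : ℝ) * (N : ℝ) ^ (h - 1 : ℕ) := by
    have e : ∑ ν ∈ Finset.Icc 1 N, ((B ν).card : ℝ) ^ (h : ℝ)
        = ((∑ ν ∈ Finset.Icc 1 N, (B ν).card ^ h : ℕ) : ℝ) := by
      push_cast
      exact Finset.sum_congr rfl fun ν _ => Real.rpow_natCast _ _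
    rw [e]
    have := hsum_pow
    calc ((∑ ν ∈ Finset.Icc 1 N, (B ν).card ^ h : ℕ) : ℝ)
        ≤ ((c₁ * N ^ (h - 1) : ℕ) : ℝ) := by exact_mod_cast this
      _ = (c₁ : ℝ) * (N : ℝ) ^ (h - 1 : ℕ) := by push_cast; ring
  -- harmonic bound
  have hharm : ∑ ν ∈ Finset.Icc 1 N, ((ν : ℝ))⁻¹ ≤ c₂ * Real.log N := by
    have h1 : ∑ ν ∈ Finset.Icc 1 N, ((ν : ℝ))⁻¹ = ((harmonic N : ℚ) : ℝ) := by
      rw [harmonic_eq_sum_Icc]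
      push_cast
      rfl
    rw [h1]
    have h2 := harmonic_le_one_add_log N
    have hlogN : Real.log 2 ≤ Real.log N :=
      Real.log_le_log (by norm_num) (by exact_mod_cast hN)
    have h3 : (1 : ℝ) ≤ Real.log N / Real.log 2 := (one_le_div hlog2).mpr hlogN
    calc ((harmonic N : ℚ) : ℝ) ≤ 1 + Real.log N := h2
      _ ≤ Real.log N / Real.log 2 + Real.log N := by linarith
      _ = c₂ * Real.log N := by rw [hc₂]; ring
  have hlogNpos : 0 < Real.log N := lt_of_lt_of_le hlog2
    (Real.log_le_log (by norm_num) (by exact_mod_cast hN))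
  -- Hölder
  have holder := Real.inner_le_Lp_mul_Lq_of_nonneg (Finset.Icc 1 N)
    (f := fun ν : ℕ => ((B ν).card : ℝ))
    (g := fun ν : ℕ => (ν : ℝ) ^ (-(1 - (1 : ℝ) / h))) hpq
    (fun i _ => by positivity)
    (fun i _ => Real.rpow_nonneg (Nat.cast_nonneg _) _)
  have hgq : ∀ i : ℕ, ((i : ℝ) ^ (-(1 - (1 : ℝ) / h))) ^ q = ((i : ℝ))⁻¹ := by
    intro i
    rw [← Real.rpow_mul (Nat.cast_nonneg i)]
    have he : (-(1 - (1 : ℝ) / h)) * q = -1 := by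
      rw [hα]
      field_simp
    rw [he, Real.rpow_neg_one]
  simp only [hgq] at holder
  simp only [hncard]
  refine le_trans holder ?_
  -- bound the two factors
  have hf1 : (∑ ν ∈ Finset.Icc 1 N, ((B ν).card : ℝ) ^ (h : ℝ)) ^ (1 / (h : ℝ))
      ≤ ((c₁ : ℝ) * (N : ℝ) ^ (h - 1 : ℕ)) ^ (1 / (h : ℝ)) :=
    Real.rpow_le_rpow (Finset.sum_nonneg fun i _ =>
      Real.rpow_nonneg (Nat.cast_nonneg _) _) hsum_pow' (by positivity)
  have hf2 : (∑ ν ∈ Finset.Icc 1 N, ((ν : ℝ))⁻¹) ^ (1 / q)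
      ≤ (c₂ * Real.log N) ^ (1 / q) :=
    Real.rpow_le_rpow (Finset.sum_nonneg fun i _ => by positivity) hharm (by positivity)
  have step1 : (∑ ν ∈ Finset.Icc 1 N, ((B ν).card : ℝ) ^ (h : ℝ)) ^ (1 / (h : ℝ)) *
        (∑ ν ∈ Finset.Icc 1 N, ((ν : ℝ))⁻¹) ^ (1 / q)
      ≤ ((c₁ : ℝ) * (N : ℝ) ^ (h - 1 : ℕ)) ^ (1 / (h : ℝ)) * (c₂ * Real.log N) ^ (1 / q) := by
    apply mul_le_mul hf1 hf2
    · exact Real.rpow_nonneg (Finset.sum_nonneg fun i _ => by positivity) _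
    · exact Real.rpow_nonneg (by positivity) _
  refine le_trans step1 ?_
  -- simplify the right-hand side
  have hNnonneg : (0 : ℝ) ≤ N := Nat.cast_nonneg N
  have hc₁nonneg : (0 : ℝ) ≤ (c₁ : ℝ) := Nat.cast_nonneg _
  have e1 : ((c₁ : ℝ) * (N : ℝ) ^ (h - 1 : ℕ)) ^ (1 / (h : ℝ))
      = (c₁ : ℝ) ^ (1 / (h : ℝ)) * (N : ℝ) ^ (1 - (1 : ℝ) / h) := by
    rw [Real.mul_rpow hc₁nonneg (by positivity)]
    congr 1
    rw [← Real.rpow_natCast (N : ℝ) (h - 1), ← Real.rpow_mul hNnonneg]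
    congr 1
    have : ((h - 1 : ℕ) : ℝ) = (h : ℝ) - 1 := by
      rw [Nat.cast_sub (by omega), Nat.cast_one]
    rw [this]
    field_simp
  have e2 : (c₂ * Real.log N) ^ (1 / q)
      = c₂ ^ (1 - (1 : ℝ) / h) * (Real.log N) ^ (1 - (1 : ℝ) / h) := by
    rw [hα, Real.mul_rpow (by positivity) (le_of_lt hlogNpos)]
  rw [e1, e2]
  have e3 : ((N : ℝ) * Real.log N) ^ (1 - (1 : ℝ) / h)
      = (N : ℝ) ^ (1 - (1 : ℝ) / h) * (Real.log N) ^ (1 - (1 : ℝ) / h) :=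
    Real.mul_rpow hNnonneg (le_of_lt hlogNpos)
  rw [e3]
  have b1 : (c₁ : ℝ) ^ (1 / (h : ℝ)) ≤ (c₁ : ℝ) := by
    have hc₁1 : (1 : ℝ) ≤ (c₁ : ℝ) := by exact_mod_cast hc₁pos
    calc (c₁ : ℝ) ^ (1 / (h : ℝ)) ≤ (c₁ : ℝ) ^ (1 : ℝ) :=
        Real.rpow_le_rpow_of_exponent_le hc₁1 (by
          rw [div_le_one (by linarith)]; linarith)
      _ = (c₁ : ℝ) := Real.rpow_one _
  have b2 : c₂ ^ (1 - (1 : ℝ) / h) ≤ c₂ := by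
    calc c₂ ^ (1 - (1 : ℝ) / h) ≤ c₂ ^ (1 : ℝ) :=
        Real.rpow_le_rpow_of_exponent_le hc₂1 hα1
      _ = c₂ := Real.rpow_one _
  have hNα : (0 : ℝ) ≤ (N : ℝ) ^ (1 - (1 : ℝ) / h) := Real.rpow_nonneg hNnonneg _
  have hLα : (0 : ℝ) ≤ (Real.log N) ^ (1 - (1 : ℝ) / h) :=
    Real.rpow_nonneg (le_of_lt hlogNpos) _
  calc (c₁ : ℝ) ^ (1 / (h : ℝ)) * (N : ℝ) ^ (1 - (1 : ℝ) / h) *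
        (c₂ ^ (1 - (1 : ℝ) / h) * (Real.log N) ^ (1 - (1 : ℝ) / h))
      = ((c₁ : ℝ) ^ (1 / (h : ℝ)) * c₂ ^ (1 - (1 : ℝ) / h)) *
        ((N : ℝ) ^ (1 - (1 : ℝ) / h) * (Real.log N) ^ (1 - (1 : ℝ) / h)) := by ring
    _ ≤ ((c₁ : ℝ) * c₂) * ((N : ℝ) ^ (1 - (1 : ℝ) / h) * (Real.log N) ^ (1 - (1 : ℝ) / h)) := by
        apply mul_le_mul_of_nonneg_right _ (mul_nonneg hNα hLα)
        apply mul_le_mul b1 b2 (Real.rpow_nonneg (by linarith) _) hc₁nonneg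
    _ = (c₁ : ℝ) * c₂ * ((N : ℝ) ^ (1 - (1 : ℝ) / h) * (Real.log N) ^ (1 - (1 : ℝ) / h)) := rfl
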